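/- Let h(x) = x(x-1)···(x-k+1) be the falling factorial of length k, for integer k ≥ 1. Then for every real t ≥ k-1, the derivative satisfies h'(t) ≥ k · f_k(t-1), where f_k(x) = x(x-1)···(x-k+2). -/

import Mathlib

theorem stmt_4 (k : ℕ) (hk : 1 ≤ k) (t : ℝ) (ht : (k : ℝ) - 1 ≤ t) :
    (k : ℝ) * ∏ i ∈ Finset.range (k - 1), (t - 1 - i) ≤
      deriv (fun x : ℝ => ∏ i ∈ Finset.range k, (x - i)) t := by
  obtain ⟨m, rfl⟩ : ∃ m, k = m + 1 := ⟨k - 1, (Nat.succ_pred_eq_of_pos hk).symm⟩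
  have hm : (m : ℝ) ≤ t := by push_cast at ht ⊢; linarith
  have hd : HasDerivAt (fun x : ℝ => ∏ i ∈ Finset.range (m + 1), (x - i))
      (∑ j ∈ Finset.range (m + 1), ∏ i ∈ (Finset.range (m + 1)).erase j, (t - i)) t := by
    have := HasDerivAt.fun_finsetProd (u := Finset.range (m + 1))
      (f := fun i (x : ℝ) => x - (i : ℝ)) (f' := fun _ => (1 : ℝ)) (x := t)
      (fun i _ => (hasDerivAt_id t).sub_const _)
    simpa using this
  rw [hd.deriv]
  -- key bound for each j
  have key : ∀ j ∈ Finset.range (m + 1),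
      ∏ i ∈ Finset.range m, (t - 1 - i) ≤ ∏ i ∈ (Finset.range (m + 1)).erase j, (t - i) := by
    intro j hj
    rw [Finset.mem_range] at hj
    have hrw : ∏ i ∈ (Finset.range (m + 1)).erase j, (t - i)
        = ∏ i ∈ Finset.range m, (t - (if i < j then (i : ℝ) else (i : ℝ) + 1)) := by
      refine (Finset.prod_nbij' (fun i => if i < j then i else i + 1)
        (fun i => if i < j then i else i - 1) ?_ ?_ ?_ ?_ ?_).symm
      · intro a ha
        simp only [Finset.mem_range] at ha
        simp only [Finset.mem_erase, Finset.mem_range]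
        split_ifs with h <;> omega
      · intro a ha
        simp only [Finset.mem_erase, Finset.mem_range] at ha
        simp only [Finset.mem_range]
        split_ifs with h <;> omega
      · intro a ha
        simp only [Finset.mem_range] at ha
        split_ifs with h1 h2 h2 <;> omega
      · intro a ha
        simp only [Finset.mem_erase, Finset.mem_range] at ha
        split_ifs with h1 h2 h2 <;> omega
      · intro a ha
        simp only [Finset.mem_range] at ha
        split_ifs with h
        · rfl
        · push_cast; ring
    rw [hrw]
    refine Finset.prod_le_prod (fun i hi => ?_) (fun i hi => ?_)
    · rw [Finset.mem_range] at hi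
      have : (i : ℝ) + 1 ≤ m := by exact_mod_cast Nat.succ_le_of_lt hi
      linarith
    · split_ifs with h
      · linarith
      · linarith
  calc ((m + 1 : ℕ) : ℝ) * ∏ i ∈ Finset.range (m + 1 - 1), (t - 1 - i)
      = ∑ _j ∈ Finset.range (m + 1), ∏ i ∈ Finset.range m, (t - 1 - i) := by
        rw [Finset.sum_const, Finset.card_range]; push_cast; ring
    _ ≤ ∑ j ∈ Finset.range (m + 1), ∏ i ∈ (Finset.range (m + 1)).erase j, (t - i) :=
        Finset.sum_le_sum key
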